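/- arXiv:2410.21942 — 3 statements merged into one kernel-verified Lean document; each statement's English description precedes it below -/
import Mathlib

section
/- (Gyarmati–Matolcsi–Ruzsa sub-multiplicativity, case K = 3) For finite nonempty sets A₁, A₂, A₃ of integers, |A₁ + A₂ + A₃|² ≤ |A₂ + A₃| · |A₁ + A₃| · |A₁ + A₂|. -/
set_option maxHeartbeats 1000000


open Pointwise

theorem gmr_submultiplicativity_three (A₁ A₂ A₃ : Finset ℤ)
    (h₁ : A₁.Nonempty) (h₂ : A₂.Nonempty) (h₃ : A₃.Nonempty) :
    (A₁ + A₂ + A₃).card ^ 2 ≤ (A₂ + A₃).card * (A₁ + A₃).card * (A₁ + A₂).card := by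
  classical
  set P : Finset ℤ := A₁ + A₂ with hPdef
  set S : Finset ℤ := P + A₃ with hSdef
  -- the function choosing the minimal third coordinate
  set c : ℤ → ℤ := fun s =>
    if h : (A₃.filter fun γ => s - γ ∈ P).Nonempty then (A₃.filter fun γ => s - γ ∈ P).min' h
    else 0 with hcdef
  have hcspec : ∀ s ∈ S, c s ∈ A₃ ∧ s - c s ∈ P ∧ ∀ γ ∈ A₃, s - γ ∈ P → c s ≤ γ := by
    intro s hs
    have hne : (A₃.filter fun γ => s - γ ∈ P).Nonempty := by
      obtain ⟨p, hp, γ, hγ, hpe⟩ := Finset.mem_add.1 hs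
      exact ⟨γ, Finset.mem_filter.2 ⟨hγ, by rw [← hpe]; simpa using hp⟩⟩
    have hcs : c s = (A₃.filter fun γ => s - γ ∈ P).min' hne := by
      simp only [hcdef, dif_pos hne]
    have hmem := (A₃.filter fun γ => s - γ ∈ P).min'_mem hne
    rw [Finset.mem_filter] at hmem
    refine ⟨by rw [hcs]; exact hmem.1, by rw [hcs]; exact hmem.2, ?_⟩
    intro γ hγ hγP
    rw [hcs]
    have hγmem : γ ∈ A₃.filter fun γ' => s - γ' ∈ P := Finset.mem_filter.2 ⟨hγ, hγP⟩
    exact Finset.min'_le _ _ hγmem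
  -- the function choosing a decomposition of elements of P
  set a : ℤ → ℤ := fun p => if h : ∃ x ∈ A₁, p - x ∈ A₂ then h.choose else 0 with hadef
  have haspec : ∀ p ∈ P, a p ∈ A₁ ∧ p - a p ∈ A₂ := by
    intro p hp
    have h : ∃ x ∈ A₁, p - x ∈ A₂ := by
      obtain ⟨x, hx, y, hy, hpe⟩ := Finset.mem_add.1 hp
      exact ⟨x, hx, by rw [← hpe]; simpa using hy⟩
    have hh : a p = h.choose := by simp only [hadef, dif_pos h]
    rw [hh]
    exact ⟨h.choose_spec.1, h.choose_spec.2⟩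
  have hcP : ∀ s ∈ S, s - c s ∈ P := fun s hs => (hcspec s hs).2.1
  have hc3 : ∀ s ∈ S, c s ∈ A₃ := fun s hs => (hcspec s hs).1
  have hcmin : ∀ s ∈ S, ∀ γ ∈ A₃, s - γ ∈ P → c s ≤ γ := fun s hs => (hcspec s hs).2.2
  -- Step A : fiber decomposition of S
  have stepA : S.card = ∑ p ∈ P, (S.filter fun s => s - c s = p).card :=
    Finset.card_eq_sum_card_fiberwise hcP
  -- the set of pairs lying in the same fiber
  set E : Finset (ℤ × ℤ) := (S ×ˢ S).filter fun z => z.1 - c z.1 = z.2 - c z.2 with hEdef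
  have hEmem : ∀ z ∈ E, z.1 - c z.1 ∈ P := by
    intro z hz
    rw [hEdef, Finset.mem_filter, Finset.mem_product] at hz
    exact hcP _ hz.1.1
  -- Step B : E decomposes fiberwise into squares
  have stepB : E.card = ∑ p ∈ P, (S.filter fun s => s - c s = p).card ^ 2 := by
    rw [Finset.card_eq_sum_card_fiberwise hEmem]
    refine Finset.sum_congr rfl fun p hp => ?_
    have hfib : E.filter (fun z => z.1 - c z.1 = p)
        = (S.filter fun s => s - c s = p) ×ˢ (S.filter fun s => s - c s = p) := by
      ext zz
      obtain ⟨u, v⟩ := zz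
      simp only [hEdef, Finset.filter_filter, Finset.mem_filter, Finset.mem_product]
      constructor
      · rintro ⟨⟨hs, ht⟩, heq, hp1⟩
        exact ⟨⟨hs, hp1⟩, ht, by rw [← heq]; exact hp1⟩
      · rintro ⟨⟨hs, hp1⟩, ht, hp2⟩
        exact ⟨⟨hs, ht⟩, hp1.trans hp2.symm, hp1⟩
    rw [hfib, Finset.card_product, sq]
  -- Step C : injection of E into (A₁+A₃) ×ˢ (A₂+A₃)
  have stepC : E.card ≤ ((A₁ + A₃) ×ˢ (A₂ + A₃)).card := by
    apply Finset.card_le_card_of_injOn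
      (fun z => (a (z.1 - c z.1) + c z.2, (z.1 - c z.1 - a (z.1 - c z.1)) + c z.1))
    · intro z hz
      rw [hEdef, Finset.mem_coe, Finset.mem_filter, Finset.mem_product] at hz
      obtain ⟨⟨hs, ht⟩, heq⟩ := hz
      have hp := hcP _ hs
      obtain ⟨ha1, ha2⟩ := haspec _ hp
      exact Finset.mem_product.2
        ⟨Finset.add_mem_add ha1 (hc3 _ ht), Finset.add_mem_add ha2 (hc3 _ hs)⟩
    · intro z hz w hw hzw
      rw [Finset.mem_coe, hEdef, Finset.mem_filter, Finset.mem_product] at hz hw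
      obtain ⟨⟨hs, ht⟩, heq⟩ := hz
      obtain ⟨⟨hσ, hτ⟩, heq'⟩ := hw
      obtain ⟨e1, e2⟩ := Prod.ext_iff.1 hzw
      simp only at e1 e2
      obtain ⟨hap1, hap2⟩ := haspec _ (hcP _ hs)
      obtain ⟨haq1, haq2⟩ := haspec _ (hcP _ hσ)
      set s := z.1
      set t := z.2
      set σ := w.1
      set τ := w.2
      -- first : a-parts are equal
      have haeq : a (s - c s) = a (σ - c σ) := by
        rcases lt_trichotomy (a (s - c s)) (a (σ - c σ)) with h | h | h
        · exfalso
          have hmem : t - c τ ∈ P := by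
            have : t - c τ = a (σ - c σ) + (s - c s - a (s - c s)) := by linarith
            rw [this]
            exact Finset.add_mem_add haq1 hap2
          have := hcmin t ht (c τ) (hc3 τ hτ) hmem
          linarith
        · exact h
        · exfalso
          have hmem : τ - c t ∈ P := by
            have : τ - c t = a (s - c s) + (σ - c σ - a (σ - c σ)) := by linarith
            rw [this]
            exact Finset.add_mem_add hap1 haq2
          have := hcmin τ hτ (c t) (hc3 t ht) hmem
          linarith
      -- second : b-parts are equal
      have hbeq : s - c s - a (s - c s) = σ - c σ - a (σ - c σ) := by
        rcases lt_trichotomy (s - c s - a (s - c s)) (σ - c σ - a (σ - c σ)) with h | h | h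
        · exfalso
          have hmem : s - c σ ∈ P := by
            have : s - c σ = a (s - c s) + (σ - c σ - a (σ - c σ)) := by linarith
            rw [this]
            exact Finset.add_mem_add hap1 haq2
          have := hcmin s hs (c σ) (hc3 σ hσ) hmem
          linarith
        · exact h
        · exfalso
          have hmem : σ - c s ∈ P := by
            have : σ - c s = a (σ - c σ) + (s - c s - a (s - c s)) := by linarith
            rw [this]
            exact Finset.add_mem_add haq1 hap2
          have := hcmin σ hσ (c s) (hc3 s hs) hmem
          linarith
      have h1 : s = σ := by linarith
      have h2 : t = τ := by linarith
      exact Prod.ext h1 h2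
  -- Cauchy-Schwarz
  have CS : (S.card : ℤ) ^ 2
      ≤ (P.card : ℤ) * ∑ p ∈ P, ((S.filter fun s => s - c s = p).card : ℤ) ^ 2 := by
    have h0 : (S.card : ℤ) = ∑ p ∈ P, ((S.filter fun s => s - c s = p).card : ℤ) := by
      exact_mod_cast stepA
    rw [h0]
    exact sq_sum_le_card_mul_sum_sq
  have main : S.card ^ 2 ≤ P.card * E.card := by
    have hE' : (E.card : ℤ) = ∑ p ∈ P, ((S.filter fun s => s - c s = p).card : ℤ) ^ 2 := by
      exact_mod_cast stepB
    have h2 : (P.card : ℤ) * ∑ p ∈ P, ((S.filter fun s => s - c s = p).card : ℤ) ^ 2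
        = (P.card : ℤ) * (E.card : ℤ) := by rw [hE']
    exact_mod_cast CS.trans_eq h2
  calc S.card ^ 2 ≤ P.card * E.card := main
    _ ≤ P.card * ((A₁ + A₃) ×ˢ (A₂ + A₃)).card := Nat.mul_le_mul_left _ stepC
    _ = (A₂ + A₃).card * (A₁ + A₃).card * P.card := by
        rw [Finset.card_product]; ring
end

section
/- If A₁ + ⋯ + A_K is a K-fold sumset of finite nonempty subsets of ℤ and each (K−1)-fold sumset Bᵢ = ∑_{j≠i} A_j satisfies |Bᵢ| ≤ s, then |A₁ + ⋯ + A_K| ≤ s^(K/(K−1)). -/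
open Pointwise Finset


lemma sum_mem_pointwise_sum {ι : Type*} (s : Finset ι) (A : ι → Finset ℤ)
    (g : ι → ℤ) (hg : ∀ i ∈ s, g i ∈ A i) : (∑ i ∈ s, g i) ∈ ∑ i ∈ s, A i := by
  classical
  induction s using Finset.cons_induction with
  | empty => simp [Finset.mem_zero]
  | cons a s ha ih =>
    rw [Finset.sum_cons, Finset.sum_cons]
    exact Finset.add_mem_add (hg a (Finset.mem_cons_self _ _))
      (ih fun i hi => hg i (Finset.mem_cons.2 (Or.inr hi)))

lemma exists_rep_pointwise_sum {ι : Type*} (s : Finset ι) (A : ι → Finset ℤ) (x : ℤ)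
    (hx : x ∈ ∑ i ∈ s, A i) : ∃ g : ι → ℤ, (∀ i ∈ s, g i ∈ A i) ∧ ∑ i ∈ s, g i = x := by
  classical
  induction s using Finset.cons_induction generalizing x with
  | empty =>
    refine ⟨fun _ => 0, by simp, ?_⟩
    simp only [Finset.sum_empty] at hx ⊢
    exact (Finset.mem_zero.1 hx).symm
  | cons a s ha ih =>
    rw [Finset.sum_cons, Finset.mem_add] at hx
    obtain ⟨y, hy, z, hz, rfl⟩ := hx
    obtain ⟨g, hg1, hg2⟩ := ih z hz
    refine ⟨Function.update g a y, ?_, ?_⟩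
    · intro i hi
      rcases Finset.mem_cons.1 hi with rfl | hi
      · simpa using hy
      · rw [Function.update_of_ne (ne_of_mem_of_not_mem hi ha)]
        exact hg1 i hi
    · rw [Finset.sum_cons, Function.update_self]
      congr 1
      rw [← hg2]
      exact Finset.sum_congr rfl fun i hi => Function.update_of_ne (ne_of_mem_of_not_mem hi ha) _ _


lemma holder_nnreal {ι : Type*} (T : Finset ι) (m : ℕ) (hm : 0 < m) (c : NNReal)
    (x : ι → NNReal) (y : Fin m → ι → NNReal)
    (h : ∀ t ∈ T, x t ^ m ≤ c * ∏ i, y i t) :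
    (∑ t ∈ T, x t) ^ m ≤ c * ∏ i, ∑ t ∈ T, y i t := by
  classical
  set S : Fin m → NNReal := fun i => ∑ t ∈ T, y i t with hS
  by_cases h0 : c = 0 ∨ ∃ i, S i = 0
  · have hx0 : ∀ t ∈ T, x t = 0 := by
      intro t ht
      have hle := h t ht
      have hzero : c * ∏ i, y i t = 0 := by
        rcases h0 with rfl | ⟨i, hi⟩
        · simp
        · have hyi : y i t = 0 := by
            have h1 : y i t ≤ S i :=
              Finset.single_le_sum (f := fun t => y i t) (fun _ _ => zero_le) ht
            rw [hi] at h1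
            exact le_antisymm h1 zero_le
          rw [Finset.prod_eq_zero (Finset.mem_univ i) hyi, mul_zero]
      rw [hzero] at hle
      have := le_antisymm hle zero_le
      exact pow_eq_zero_iff hm.ne' |>.1 this
    rw [Finset.sum_eq_zero hx0, zero_pow hm.ne']
    exact zero_le
  · push_neg at h0
    obtain ⟨hc, hSi⟩ := h0
    have hmR : (m : ℝ) ≠ 0 := Nat.cast_ne_zero.2 hm.ne'
    set p : ℝ := (m : ℝ)⁻¹ with hp
    set w : Fin m → NNReal := fun _ => (m : NNReal)⁻¹ with hw
    have hwcoe : ∀ i : Fin m, ((w i : NNReal) : ℝ) = p := by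
      intro i; simp [hw, hp]
    have hw1 : ∑ _i : Fin m, (m : NNReal)⁻¹ = 1 := by
      rw [Finset.sum_const, Finset.card_univ, Fintype.card_fin, nsmul_eq_mul,
        mul_inv_cancel₀ (by exact_mod_cast hm.ne')]
    have key : ∑ t ∈ T, x t ≤ (c * ∏ i, S i) ^ p := by
      have pointwise : ∀ t ∈ T, x t ≤ (c * ∏ i, S i) ^ p * ∑ i, w i * (y i t / S i) := by
        intro t ht
        have hxle : x t ≤ (c * ∏ i, y i t) ^ p := by
          have h1 : x t = (x t ^ m) ^ p := by
            rw [← NNReal.rpow_natCast (x t) m, ← NNReal.rpow_mul,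
              mul_inv_cancel₀ hmR, NNReal.rpow_one]
          rw [h1]
          exact NNReal.rpow_le_rpow (h t ht) (by positivity)
        have hfact : ∀ i : Fin m, y i t = (y i t / S i) * S i := by
          intro i; rw [div_mul_cancel₀ _ (hSi i)]
        have hprod : (∏ i, y i t) = (∏ i, y i t / S i) * ∏ i, S i := by
          calc (∏ i, y i t) = ∏ i, (y i t / S i) * S i :=
                Finset.prod_congr rfl fun i _ => hfact i
            _ = (∏ i, y i t / S i) * ∏ i, S i := Finset.prod_mul_distrib
        have h2 : (c * ∏ i, y i t) ^ p
            = (c * ∏ i, S i) ^ p * (∏ i, y i t / S i) ^ p := by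
          rw [hprod, ← NNReal.mul_rpow]
          ring_nf
        have h3 : (∏ i, y i t / S i) ^ p ≤ ∑ i, w i * (y i t / S i) := by
          have := NNReal.geom_mean_le_arith_mean_weighted Finset.univ w
            (fun i => y i t / S i) (by simpa [hw] using hw1)
          calc (∏ i, y i t / S i) ^ p = ∏ i, (y i t / S i) ^ ((w i : NNReal) : ℝ) := by
                rw [← NNReal.finset_prod_rpow Finset.univ (fun i => y i t / S i) p]
                exact Finset.prod_congr rfl fun i _ => by rw [hwcoe i]
            _ ≤ ∑ i, w i * (y i t / S i) := this
        calc x t ≤ (c * ∏ i, y i t) ^ p := hxle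
          _ = (c * ∏ i, S i) ^ p * (∏ i, y i t / S i) ^ p := h2
          _ ≤ (c * ∏ i, S i) ^ p * ∑ i, w i * (y i t / S i) := by
              exact mul_le_mul_right h3 _
      calc ∑ t ∈ T, x t
          ≤ ∑ t ∈ T, (c * ∏ i, S i) ^ p * ∑ i, w i * (y i t / S i) :=
            Finset.sum_le_sum pointwise
        _ = (c * ∏ i, S i) ^ p * ∑ t ∈ T, ∑ i, w i * (y i t / S i) := by
            rw [Finset.mul_sum]
        _ = (c * ∏ i, S i) ^ p := by
            rw [Finset.sum_comm]
            have : ∀ i : Fin m, ∑ t ∈ T, w i * (y i t / S i) = w i := by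
              intro i
              rw [← Finset.mul_sum, ← Finset.sum_div]
              have hSe : (∑ t ∈ T, y i t) = S i := rfl
              rw [hSe, div_self (hSi i), mul_one]
            rw [Finset.sum_congr rfl fun i _ => this i]
            rw [hw, hw1, mul_one]
    calc (∑ t ∈ T, x t) ^ m ≤ ((c * ∏ i, S i) ^ p) ^ m :=
          pow_le_pow_left' key m
      _ = c * ∏ i, S i := by
          rw [← NNReal.rpow_natCast ((c * ∏ i, S i) ^ p) m, ← NNReal.rpow_mul,
            inv_mul_cancel₀ hmR, NNReal.rpow_one]

lemma loomis_whitney : ∀ (n : ℕ) (R : Finset (Fin (n+1) → ℤ)), R.Nonempty →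
    (R.card : NNReal) ^ n
      ≤ ∏ i : Fin (n+1), ((R.image fun r => r ∘ i.succAbove).card : NNReal) := by
  intro n
  induction n with
  | zero =>
    intro R hR
    rw [pow_zero]
    refine Finset.one_le_prod' fun i _ => ?_
    have h1 : (R.image fun r => r ∘ i.succAbove).Nonempty := hR.image _
    exact_mod_cast Nat.one_le_iff_ne_zero.2 (Finset.card_ne_zero.2 h1)
  | succ n ih =>
    intro R hR
    classical
    set lst : Fin (n+2) := Fin.last (n+1) with hlst
    set T : Finset ℤ := R.image (fun r => r lst) with hT
    set Rt : ℤ → Finset (Fin (n+2) → ℤ) := fun t => R.filter (fun r => r lst = t) with hRt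
    set P : Fin (n+2) → Finset (Fin (n+1) → ℤ) :=
      fun i => R.image (fun r => r ∘ i.succAbove) with hP
    set St : Fin (n+1) → ℤ → Finset (Fin (n+1) → ℤ) :=
      fun j t => (P j.castSucc).filter (fun q => q (Fin.last n) = t) with hSt
    have hsucclast : ∀ j : Fin (n+1), (j.castSucc).succAbove (Fin.last n) = lst := by
      intro j
      rw [Fin.succAbove_of_le_castSucc _ _
        (Fin.castSucc_le_castSucc_iff.2 (Fin.le_last j)), Fin.succ_last]
    have hcardR : R.card = ∑ t ∈ T, (Rt t).card :=
      Finset.card_eq_sum_card_fiberwise (fun r hr => Finset.mem_image_of_mem _ hr)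
    have hPlastmem : ∀ j : Fin (n+1), ∀ q ∈ P j.castSucc, q (Fin.last n) ∈ T := by
      intro j q hq
      obtain ⟨r, hr, rfl⟩ := Finset.mem_image.1 hq
      simp only [Function.comp_apply, hsucclast j]
      exact Finset.mem_image_of_mem _ hr
    have hcardP : ∀ j : Fin (n+1), (P j.castSucc).card = ∑ t ∈ T, (St j t).card :=
      fun j => Finset.card_eq_sum_card_fiberwise (hPlastmem j)
    have hslice : ∀ t ∈ T, ((Rt t).card : NNReal) ^ (n+1)
        ≤ ((P lst).card : NNReal) * ∏ j : Fin (n+1), ((St j t).card : NNReal) := by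
      intro t ht
      set Q : Finset (Fin (n+1) → ℤ) := (Rt t).image (fun r => r ∘ Fin.castSucc) with hQ
      have hmemRt : ∀ r ∈ Rt t, r lst = t := by
        intro r hr; exact (Finset.mem_filter.1 hr).2
      have hQcard : Q.card = (Rt t).card := by
        apply Finset.card_image_of_injOn
        intro r hr r' hr' hrr
        funext k
        induction k using Fin.lastCases with
        | last => rw [show Fin.last (n+1) = lst from rfl, hmemRt r hr, hmemRt r' hr']
        | cast i => exact congrFun hrr i
      have hRtne : (Rt t).Nonempty := by
        obtain ⟨r, hr, hrt⟩ := Finset.mem_image.1 ht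
        exact ⟨r, Finset.mem_filter.2 ⟨hr, hrt⟩⟩
      have hQne : Q.Nonempty := hRtne.image _
      have hQsub : Q ⊆ P lst := by
        intro q hq
        obtain ⟨r, hr, rfl⟩ := Finset.mem_image.1 hq
        refine Finset.mem_image.2 ⟨r, (Finset.mem_filter.1 hr).1, ?_⟩
        show r ∘ (Fin.last (n+1)).succAbove = r ∘ Fin.castSucc
        rw [Fin.succAbove_last]
      have hproj : ∀ j : Fin (n+1),
          (Q.image fun q => q ∘ j.succAbove).card ≤ (St j t).card := by
        intro j
        apply Finset.card_le_card_of_injOn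
          (fun q' : Fin n → ℤ => (Fin.snoc q' t : Fin (n+1) → ℤ))
        · intro q' hq'
          obtain ⟨q, hq, rfl⟩ := Finset.mem_image.1 hq'
          obtain ⟨r, hr, rfl⟩ := Finset.mem_image.1 hq
          have hkey : (Fin.snoc ((r ∘ Fin.castSucc) ∘ j.succAbove) t : Fin (n+1) → ℤ)
              = r ∘ (j.castSucc).succAbove := by
            funext k
            induction k using Fin.lastCases with
            | last =>
              rw [Fin.snoc_last, Function.comp_apply, hsucclast j, hmemRt r hr]
            | cast i =>
              rw [Fin.snoc_castSucc, Function.comp_apply, Function.comp_apply,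
                Function.comp_apply, Fin.castSucc_succAbove_castSucc]
          beta_reduce
          rw [hkey, hSt]
          refine Finset.mem_filter.2 ⟨Finset.mem_image_of_mem _ (Finset.mem_filter.1 hr).1, ?_⟩
          rw [Function.comp_apply, hsucclast j, hmemRt r hr]
        · intro a ha b hb hab
          funext i
          have h2 := congrFun hab i.castSucc
          simpa only [Fin.snoc_castSucc] using h2
      have hIH := ih Q hQne
      have hQP : (Q.card : NNReal) ≤ ((P lst).card : NNReal) :=
        Nat.cast_le.2 (Finset.card_le_card hQsub)
      calc ((Rt t).card : NNReal) ^ (n+1)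
          = ((Rt t).card : NNReal) * ((Rt t).card : NNReal) ^ n := by ring
        _ = (Q.card : NNReal) * (Q.card : NNReal) ^ n := by rw [hQcard]
        _ ≤ ((P lst).card : NNReal) * ∏ j : Fin (n+1),
              ((Q.image fun q => q ∘ j.succAbove).card : NNReal) :=
            mul_le_mul hQP hIH zero_le zero_le
        _ ≤ ((P lst).card : NNReal) * ∏ j : Fin (n+1), ((St j t).card : NNReal) := by
            refine mul_le_mul_right (Finset.prod_le_prod' fun j _ => ?_) _
            exact Nat.cast_le.2 (hproj j)
    have hH := holder_nnreal T (n+1) (Nat.succ_pos n) ((P lst).card : NNReal)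
      (fun t => ((Rt t).card : NNReal)) (fun j t => ((St j t).card : NNReal)) hslice
    have hsum1 : (∑ t ∈ T, ((Rt t).card : NNReal)) = (R.card : NNReal) := by
      rw [hcardR]; push_cast; rfl
    have hsum2 : ∀ j : Fin (n+1),
        (∑ t ∈ T, ((St j t).card : NNReal)) = ((P j.castSucc).card : NNReal) := by
      intro j; rw [hcardP j]; push_cast; rfl
    rw [hsum1] at hH
    calc (R.card : NNReal) ^ (n+1)
        ≤ ((P lst).card : NNReal) * ∏ j : Fin (n+1), ∑ t ∈ T, ((St j t).card : NNReal) := hH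
      _ = ((P lst).card : NNReal) * ∏ j : Fin (n+1), ((P j.castSucc).card : NNReal) := by
          rw [Finset.prod_congr rfl fun j _ => hsum2 j]
      _ = ∏ i : Fin (n+2), ((P i).card : NNReal) := by
          rw [Fin.prod_univ_castSucc (fun i => ((P i).card : NNReal))]
          rw [mul_comm]

lemma lex_key {N : ℕ} (i : Fin N) (a a' : Fin N → ℤ)
    (h1 : toLex a < toLex (Function.update a' i (a i)))
    (h2 : toLex a' < toLex (Function.update a i (a' i))) : False := by
  have h1' : Pi.Lex (· < ·) (@fun _ => (· < ·)) a (Function.update a' i (a i)) := h1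
  have h2' : Pi.Lex (· < ·) (@fun _ => (· < ·)) a' (Function.update a i (a' i)) := h2
  obtain ⟨j, hj, hjlt⟩ := h1'
  obtain ⟨j', hj', hj'lt⟩ := h2'
  have hji : j ≠ i := by
    intro h; subst h
    rw [Function.update_self] at hjlt
    exact lt_irrefl _ hjlt
  have hj'i : j' ≠ i := by
    intro h; subst h
    rw [Function.update_self] at hj'lt
    exact lt_irrefl _ hj'lt
  rw [Function.update_of_ne hji] at hjlt
  rw [Function.update_of_ne hj'i] at hj'lt
  rcases lt_trichotomy j j' with h | h | h
  · have := hj' j h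
    rw [Function.update_of_ne hji] at this
    exact absurd hjlt (by rw [this]; exact lt_irrefl _)
  · subst h
    exact lt_irrefl _ (hjlt.trans hj'lt)
  · have := hj j' h
    rw [Function.update_of_ne hj'i] at this
    exact absurd hj'lt (by rw [← this]; exact lt_irrefl _)

theorem sumset_card_le_rpow (K : ℕ) (hK : 2 ≤ K) (A : Fin K → Finset ℤ)
    (hA : ∀ i, (A i).Nonempty) (s : ℝ) (hs : 1 ≤ s)
    (hB : ∀ i, ((∑ j ∈ Finset.univ.erase i, A j).card : ℝ) ≤ s) :
    ((∑ i, A i).card : ℝ) ≤ s ^ ((K : ℝ) / ((K : ℝ) - 1)) := by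
  classical
  obtain ⟨n, rfl⟩ : ∃ n, K = n + 2 := ⟨K - 2, by omega⟩
  letI : LinearOrder (Lex (Fin (n+2) → ℤ)) := by
    have : WellFoundedLT (Fin (n+2)) := inferInstance
    infer_instance
  set S : Finset ℤ := ∑ i, A i with hSdef
  have hSne : S.Nonempty := by
    refine ⟨∑ i, (hA i).choose, ?_⟩
    exact sum_mem_pointwise_sum _ A _ (fun i _ => (hA i).choose_spec)
  have hrep : ∀ x ∈ S, ∃ g : Fin (n+2) → ℤ, (∀ i, g i ∈ A i) ∧ (∑ i, g i = x) ∧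
      ∀ g' : Fin (n+2) → ℤ, (∀ i, g' i ∈ A i) → (∑ i, g' i = x) → toLex g ≤ toLex g' := by
    intro x hx
    set F : Finset (Fin (n+2) → ℤ) :=
      (Fintype.piFinset A).filter (fun g => ∑ i, g i = x) with hF
    have hFne : F.Nonempty := by
      obtain ⟨g, hg1, hg2⟩ := exists_rep_pointwise_sum Finset.univ A x hx
      exact ⟨g, Finset.mem_filter.2
        ⟨Fintype.mem_piFinset.2 (fun i => hg1 i (Finset.mem_univ i)), hg2⟩⟩
    obtain ⟨g, hgF, hgmin⟩ := Finset.exists_min_image F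
      (toLex : (Fin (n+2) → ℤ) → Lex (Fin (n+2) → ℤ)) hFne
    obtain ⟨hg1, hg2⟩ := Finset.mem_filter.1 hgF
    refine ⟨g, Fintype.mem_piFinset.1 hg1, hg2, ?_⟩
    intro g' hg'1 hg'2
    exact hgmin g' (Finset.mem_filter.2 ⟨Fintype.mem_piFinset.2 hg'1, hg'2⟩)
  choose! r hr1 hr2 hr3 using hrep
  set R : Finset (Fin (n+2) → ℤ) := S.image r with hR
  have hRcard : R.card = S.card := by
    apply Finset.card_image_of_injOn
    intro x hx x' hx' h
    rw [← hr2 x hx, ← hr2 x' hx', h]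
  have hRne : R.Nonempty := hSne.image r
  have hBproj : ∀ i : Fin (n+2),
      (R.image fun q => q ∘ i.succAbove).card ≤ (∑ j ∈ Finset.univ.erase i, A j).card := by
    intro i
    have hsum_eq : ∀ a : Fin (n+2) → ℤ,
        ∑ j : Fin (n+1), a (i.succAbove j) = ∑ j ∈ Finset.univ.erase i, a j := by
      intro a
      have h1 := Fin.sum_univ_succAbove a i
      have h2 : ∑ j, a j = a i + ∑ j ∈ Finset.univ.erase i, a j :=
        (Finset.add_sum_erase Finset.univ a (Finset.mem_univ i)).symm
      exact add_left_cancel (h1.symm.trans h2)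
    apply Finset.card_le_card_of_injOn (fun q => ∑ j : Fin (n+1), q j)
    · intro q hq
      obtain ⟨a0, ha0, rfl⟩ := Finset.mem_image.1 hq
      obtain ⟨x, hx, rfl⟩ := Finset.mem_image.1 ha0
      show (∑ j : Fin (n+1), r x (i.succAbove j)) ∈ _
      rw [hsum_eq (r x)]
      exact sum_mem_pointwise_sum _ A (r x) (fun j _ => hr1 x hx j)
    · intro q hq q' hq' hσ
      obtain ⟨a0, ha0, rfl⟩ := Finset.mem_image.1 hq
      obtain ⟨x, hx, rfl⟩ := Finset.mem_image.1 ha0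
      obtain ⟨a0', ha0', rfl⟩ := Finset.mem_image.1 hq'
      obtain ⟨x', hx', rfl⟩ := Finset.mem_image.1 ha0'
      simp only [Function.comp_apply] at hσ
      by_contra hne
      set a : Fin (n+2) → ℤ := r x with ha
      set a' : Fin (n+2) → ℤ := r x' with ha'
      have hxa : ∑ j, a j = x := hr2 x hx
      have hxa' : ∑ j, a' j = x' := hr2 x' hx'
      have hdec : x = a i + ∑ j : Fin (n+1), a (i.succAbove j) := by
        rw [← hxa]; exact Fin.sum_univ_succAbove a i
      have hdec' : x' = a' i + ∑ j : Fin (n+1), a' (i.succAbove j) := by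
        rw [← hxa']; exact Fin.sum_univ_succAbove a' i
      -- b := update a i (a' i) represents x'
      have hbA : ∀ j, Function.update a i (a' i) j ∈ A j := by
        intro j
        rcases eq_or_ne j i with rfl | hji
        · rw [Function.update_self]; exact hr1 x' hx' j
        · rw [Function.update_of_ne hji]; exact hr1 x hx j
      have hbsum : ∑ j, Function.update a i (a' i) j = x' := by
        rw [Fin.sum_univ_succAbove (Function.update a i (a' i)) i, Function.update_self]
        have : ∀ j : Fin (n+1), Function.update a i (a' i) (i.succAbove j) = a (i.succAbove j) :=
          fun j => Function.update_of_ne (Fin.succAbove_ne i j) _ _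
        rw [Finset.sum_congr rfl (fun j _ => this j), hσ, ← hdec']
      have hcA : ∀ j, Function.update a' i (a i) j ∈ A j := by
        intro j
        rcases eq_or_ne j i with rfl | hji
        · rw [Function.update_self]; exact hr1 x hx j
        · rw [Function.update_of_ne hji]; exact hr1 x' hx' j
      have hcsum : ∑ j, Function.update a' i (a i) j = x := by
        rw [Fin.sum_univ_succAbove (Function.update a' i (a i)) i, Function.update_self]
        have : ∀ j : Fin (n+1), Function.update a' i (a i) (i.succAbove j) = a' (i.succAbove j) :=
          fun j => Function.update_of_ne (Fin.succAbove_ne i j) _ _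
        rw [Finset.sum_congr rfl (fun j _ => this j), ← hσ, ← hdec]
      have hble : toLex a' ≤ toLex (Function.update a i (a' i)) :=
        hr3 x' hx' _ hbA hbsum
      have hcle : toLex a ≤ toLex (Function.update a' i (a i)) :=
        hr3 x hx _ hcA hcsum
      have hbne : toLex a' ≠ toLex (Function.update a i (a' i)) := by
        intro h
        have h' : a' = Function.update a i (a' i) := toLex.injective h
        apply hne
        funext j
        have := congrFun h' (i.succAbove j)
        rw [Function.update_of_ne (Fin.succAbove_ne i j)] at this
        exact this.symm
      have hcne : toLex a ≠ toLex (Function.update a' i (a i)) := by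
        intro h
        have h' : a = Function.update a' i (a i) := toLex.injective h
        apply hne
        funext j
        have := congrFun h' (i.succAbove j)
        rw [Function.update_of_ne (Fin.succAbove_ne i j)] at this
        exact this
      exact lex_key i a a' (lt_of_le_of_ne hcle hcne) (lt_of_le_of_ne hble hbne)
  -- combine with Loomis-Whitney
  have hLW := loomis_whitney (n+1) R hRne
  have hnat : S.card ^ (n+1) ≤ ∏ i : Fin (n+2), (∑ j ∈ Finset.univ.erase i, A j).card := by
    have h1 : R.card ^ (n+1) ≤ ∏ i : Fin (n+2), (R.image fun q => q ∘ i.succAbove).card := by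
      exact_mod_cast hLW
    rw [← hRcard]
    exact h1.trans (Finset.prod_le_prod' (fun i _ => hBproj i))
  -- real arithmetic
  have hs0 : (0:ℝ) ≤ s := le_trans zero_le_one hs
  have hreal : ((S.card : ℝ)) ^ (n+1) ≤ s ^ (n+2 : ℕ) := by
    calc ((S.card : ℝ)) ^ (n+1)
        ≤ (∏ i : Fin (n+2), ((∑ j ∈ Finset.univ.erase i, A j).card : ℝ)) := by
          exact_mod_cast hnat
      _ ≤ ∏ _i : Fin (n+2), s := Finset.prod_le_prod
          (fun i _ => by positivity) (fun i _ => hB i)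
      _ = s ^ (n+2 : ℕ) := by rw [Finset.prod_const, Finset.card_univ, Fintype.card_fin]
  have hexp : ((n+2 : ℕ) : ℝ) / (((n+2 : ℕ) : ℝ) - 1) = ((n+2 : ℕ) : ℝ) * (((n+1:ℕ) : ℝ))⁻¹ := by
    push_cast; ring_nf
  have hcard1 : (1:ℝ) ≤ (S.card : ℝ) := by
    exact_mod_cast Nat.one_le_iff_ne_zero.2 (Finset.card_ne_zero.2 hSne)
  have hn1 : ((n+1:ℕ) : ℝ) ≠ 0 := by positivity
  have step1 : ((S.card : ℝ)) ^ ((n+1 : ℕ) : ℝ) ≤ s ^ (((n+2:ℕ)) : ℝ) := by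
    rw [Real.rpow_natCast, Real.rpow_natCast]
    exact hreal
  have step2 : (S.card : ℝ) ≤ (s ^ (((n+2:ℕ)) : ℝ)) ^ ((((n+1:ℕ)) : ℝ))⁻¹ := by
    have h3 := Real.rpow_le_rpow (by positivity) step1 (by positivity :
      (0:ℝ) ≤ ((((n+1:ℕ)) : ℝ))⁻¹)
    rwa [← Real.rpow_mul (by positivity), mul_inv_cancel₀ hn1, Real.rpow_one] at h3
  calc ((S.card : ℝ)) ≤ (s ^ (((n+2:ℕ)) : ℝ)) ^ ((((n+1:ℕ)) : ℝ))⁻¹ := step2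
    _ = s ^ ((((n+2:ℕ)) : ℝ) * ((((n+1:ℕ)) : ℝ))⁻¹) := by
        rw [← Real.rpow_mul hs0]
    _ = s ^ ((((n+2:ℕ)) : ℝ) / ((((n+2:ℕ)) : ℝ) - 1)) := by rw [hexp]
end

section
/- (Injection bounding subset-sum counts) Let X be a finite multiset of nonnegative integers with a partition X = X₁ ⊎ X₂, and let t ≥ 0. Then every z ∈ S(X, t) can be written as z = x + z₁ + z₁′ + z₂ + z₂′ where x ∈ X ∪ {0}, z₁, z₁′ ∈ S(X₁, t/2), and z₂, z₂′ ∈ S(X₂, t/2). Consequently, |S(X, t)| ≤ (|X| + 1) · |S(X₁, t/2)|² · |S(X₂, t/2)|². -/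
/-- The set of subset sums of the multiset `X` that are at most the real threshold `s`. -/
def subsetSumsR (X : Multiset ℕ) (s : ℝ) : Set ℕ :=
  {z | (z : ℝ) ≤ s ∧ ∃ Y ≤ X, Y.sum = z}

private lemma ncard_prod' {α β : Type*} (s : Set α) (t : Set β) :
    (s ×ˢ t).ncard = s.ncard * t.ncard := by
  rw [← Nat.card_coe_set_eq, Nat.card_congr (Equiv.Set.prod s t), Nat.card_prod,
    Nat.card_coe_set_eq, Nat.card_coe_set_eq]

/-- Greedy split of a multiset into two halves with small sums. -/
private lemma split_lemma (W : Multiset ℕ) (h : ℝ) (h0 : 0 ≤ h)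
    (hb : ∀ b ∈ W, (W.sum : ℝ) + b ≤ 2 * h) :
    ∃ A ≤ W, (A.sum : ℝ) ≤ h ∧ ((W - A).sum : ℝ) ≤ h := by
  classical
  set F : Finset (Multiset ℕ) :=
    W.powerset.toFinset.filter (fun A => (A.sum : ℝ) ≤ h) with hF
  have h0F : (0 : Multiset ℕ) ∈ F := by
    simp [hF, h0, Multiset.mem_powerset]
  obtain ⟨A, hAF, hAmax⟩ := F.exists_max_image (fun A => Multiset.card A) ⟨0, h0F⟩
  simp only [hF, Finset.mem_filter, Multiset.mem_toFinset, Multiset.mem_powerset] at hAF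
  obtain ⟨hAW, hAsum⟩ := hAF
  refine ⟨A, hAW, hAsum, ?_⟩
  by_cases hWA : W - A = 0
  · simp [hWA, h0]
  · obtain ⟨b, hbWA⟩ := Multiset.exists_mem_of_ne_zero hWA
    have hbW : b ∈ W := Multiset.mem_of_le (Multiset.sub_le_self _ _) hbWA
    have hcons : b ::ₘ A ≤ W := by
      rw [Multiset.le_iff_count]
      intro c
      have h1 := Multiset.le_iff_count.mp hAW c
      have h2 : 1 ≤ Multiset.count b (W - A) := Multiset.one_le_count_iff_mem.mpr hbWA
      rw [Multiset.count_sub] at h2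
      by_cases hc : c = b
      · subst hc; rw [Multiset.count_cons_self]; omega
      · rw [Multiset.count_cons_of_ne hc]; exact h1
    have hnot : ¬ ((b ::ₘ A).sum : ℝ) ≤ h := by
      intro hle
      have hmem : b ::ₘ A ∈ F := Finset.mem_filter.mpr
        ⟨Multiset.mem_toFinset.mpr (Multiset.mem_powerset.mpr hcons), hle⟩
      have hcard := hAmax _ hmem
      rw [Multiset.card_cons] at hcard
      omega
    push_neg at hnot
    rw [Multiset.sum_cons, Nat.cast_add] at hnot
    have hsum : A.sum + (W - A).sum = W.sum := by
      rw [← Multiset.sum_add, add_tsub_cancel_of_le hAW]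
    have hb' := hb b hbW
    have hcast : ((W - A).sum : ℝ) = (W.sum : ℝ) - A.sum := by
      rw [← hsum]; push_cast; ring
    rw [hcast]
    linarith

/-- Splitting a submultiset of a sum. -/
private lemma le_add_split (Y X₁ X₂ : Multiset ℕ) (hY : Y ≤ X₁ + X₂) :
    ∃ Y₁ Y₂, Y₁ ≤ X₁ ∧ Y₂ ≤ X₂ ∧ Y = Y₁ + Y₂ := by
  classical
  refine ⟨Y ∩ X₁, Y - X₁, Multiset.inter_le_right, ?_, ?_⟩
  · rw [Multiset.le_iff_count]
    intro c
    have := Multiset.le_iff_count.mp hY c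
    rw [Multiset.count_add] at this
    rw [Multiset.count_sub]
    omega
  · ext c
    have := Multiset.le_iff_count.mp hY c
    rw [Multiset.count_add, Multiset.count_inter, Multiset.count_sub]
    omega

theorem subset_sum_count_injection (X X₁ X₂ : Multiset ℕ) (hX : X = X₁ + X₂) (t : ℕ) :
    (∀ z ∈ subsetSumsR X t, ∃ x, (x = 0 ∨ x ∈ X) ∧
      ∃ z₁ ∈ subsetSumsR X₁ ((t : ℝ) / 2), ∃ z₁' ∈ subsetSumsR X₁ ((t : ℝ) / 2),
      ∃ z₂ ∈ subsetSumsR X₂ ((t : ℝ) / 2), ∃ z₂' ∈ subsetSumsR X₂ ((t : ℝ) / 2),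
        z = x + z₁ + z₁' + z₂ + z₂') ∧
    (subsetSumsR X t).ncard ≤ (Multiset.card X + 1) *
      (subsetSumsR X₁ ((t : ℝ) / 2)).ncard ^ 2 * (subsetSumsR X₂ ((t : ℝ) / 2)).ncard ^ 2 := by
  classical
  have ht2 : (0 : ℝ) ≤ (t : ℝ) / 2 := by positivity
  have hzero : ∀ Z : Multiset ℕ, (0 : ℕ) ∈ subsetSumsR Z ((t : ℝ) / 2) := by
    intro Z
    exact ⟨by simpa using ht2, 0, zero_le, rfl⟩
  have main : ∀ z ∈ subsetSumsR X t, ∃ x, (x = 0 ∨ x ∈ X) ∧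
      ∃ z₁ ∈ subsetSumsR X₁ ((t : ℝ) / 2), ∃ z₁' ∈ subsetSumsR X₁ ((t : ℝ) / 2),
      ∃ z₂ ∈ subsetSumsR X₂ ((t : ℝ) / 2), ∃ z₂' ∈ subsetSumsR X₂ ((t : ℝ) / 2),
        z = x + z₁ + z₁' + z₂ + z₂' := by
    rintro z ⟨hzt, Y, hYX, hYsum⟩
    by_cases hY0 : Y = 0
    · refine ⟨0, Or.inl rfl, 0, hzero _, 0, hzero _, 0, hzero _, 0, hzero _, ?_⟩
      simp [← hYsum, hY0]
    · -- pick a maximal element a of Y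
      have hfne : Y.toFinset.Nonempty := by
        obtain ⟨b, hb⟩ := Multiset.exists_mem_of_ne_zero hY0
        exact ⟨b, Multiset.mem_toFinset.mpr hb⟩
      set a := Y.toFinset.max' hfne with ha
      have haY : a ∈ Y := Multiset.mem_toFinset.mp (Y.toFinset.max'_mem hfne)
      have hmax : ∀ b ∈ Y, b ≤ a := fun b hb =>
        Y.toFinset.le_max' b (Multiset.mem_toFinset.mpr hb)
      set Y' := Y.erase a with hY'
      have hconsY : a ::ₘ Y' = Y := Multiset.cons_erase haY
      have hsumY : a + Y'.sum = z := by rw [← hYsum, ← hconsY, Multiset.sum_cons]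
      have hY'le : Y' ≤ X₁ + X₂ := by
        rw [← hX]; exact le_trans (Multiset.erase_le a Y) hYX
      obtain ⟨Y₁, Y₂, hY₁, hY₂, hsplit⟩ := le_add_split Y' X₁ X₂ hY'le
      have hsumY' : Y₁.sum + Y₂.sum = Y'.sum := by rw [hsplit, Multiset.sum_add]
      -- common argument for each half
      have key : ∀ (W : Multiset ℕ), W ≤ Y' →
          ∃ A ≤ W, (A.sum : ℝ) ≤ (t : ℝ) / 2 ∧ ((W - A).sum : ℝ) ≤ (t : ℝ) / 2 := by
        intro W hW
        apply split_lemma W _ ht2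
        intro b hbW
        have hbY : b ∈ Y := Multiset.mem_of_le (le_trans hW (Multiset.erase_le a Y)) hbW
        obtain ⟨C, hC⟩ := Multiset.le_iff_exists_add.mp hW
        have h1 : W.sum ≤ Y'.sum := by rw [hC, Multiset.sum_add]; omega
        have h2 : b ≤ a := hmax b hbY
        have h3 : W.sum + b ≤ t := by
          have : W.sum + b ≤ Y'.sum + a := by omega
          have hz : Y'.sum + a = z := by omega
          have : W.sum + b ≤ z := by omega
          have hzle : z ≤ t := by exact_mod_cast hzt
          omega
        have := (Nat.cast_le (α := ℝ)).mpr h3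
        push_cast at this ⊢
        linarith
      obtain ⟨A₁, hA₁, hA₁s, hB₁s⟩ := key Y₁ (by rw [hsplit]; exact le_self_add)
      obtain ⟨A₂, hA₂, hA₂s, hB₂s⟩ := key Y₂ (by rw [hsplit]; exact le_add_self)
      have hsum₁ : A₁.sum + (Y₁ - A₁).sum = Y₁.sum := by
        rw [← Multiset.sum_add, add_tsub_cancel_of_le hA₁]
      have hsum₂ : A₂.sum + (Y₂ - A₂).sum = Y₂.sum := by
        rw [← Multiset.sum_add, add_tsub_cancel_of_le hA₂]
      refine ⟨a, Or.inr (Multiset.mem_of_le hYX haY),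
        A₁.sum, ⟨hA₁s, A₁, le_trans hA₁ hY₁, rfl⟩,
        (Y₁ - A₁).sum, ⟨hB₁s, Y₁ - A₁, le_trans (Multiset.sub_le_self _ _) hY₁, rfl⟩,
        A₂.sum, ⟨hA₂s, A₂, le_trans hA₂ hY₂, rfl⟩,
        (Y₂ - A₂).sum, ⟨hB₂s, Y₂ - A₂, le_trans (Multiset.sub_le_self _ _) hY₂, rfl⟩, ?_⟩
      omega
  refine ⟨main, ?_⟩
  -- cardinality bound
  set S0 : Set ℕ := {x | x = 0 ∨ x ∈ X} with hS0
  set S1 := subsetSumsR X₁ ((t : ℝ) / 2) with hS1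
  set S2 := subsetSumsR X₂ ((t : ℝ) / 2) with hS2
  have hfin : ∀ (Z : Multiset ℕ), (subsetSumsR Z ((t : ℝ) / 2)).Finite := by
    intro Z
    apply Set.Finite.subset (Set.finite_Iic t)
    rintro z ⟨hz, -⟩
    have : (z : ℝ) ≤ (t : ℝ) := by linarith
    exact_mod_cast this
  have hfinS0 : S0.Finite := by
    apply Set.Finite.subset (Set.finite_Iic (X.sum))
    rintro x (rfl | hx)
    · exact Nat.zero_le _
    · exact Multiset.single_le_sum (fun _ _ => Nat.zero_le _) _ hx
  have hfin1 : S1.Finite := hfin X₁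
  have hfin2 : S2.Finite := hfin X₂
  set P := S0 ×ˢ S1 ×ˢ S1 ×ˢ S2 ×ˢ S2 with hP
  have hPfin : P.Finite :=
    hfinS0.prod (hfin1.prod (hfin1.prod (hfin2.prod hfin2)))
  set f : ℕ × ℕ × ℕ × ℕ × ℕ → ℕ :=
    fun p => p.1 + p.2.1 + p.2.2.1 + p.2.2.2.1 + p.2.2.2.2 with hf
  have hsub : subsetSumsR X t ⊆ f '' P := by
    intro z hz
    obtain ⟨x, hx, z₁, hz₁, z₁', hz₁', z₂, hz₂, z₂', hz₂', heq⟩ := main z hz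
    exact ⟨(x, z₁, z₁', z₂, z₂'), ⟨hx, hz₁, hz₁', hz₂, hz₂'⟩, heq.symm⟩
  have h1 : (subsetSumsR X t).ncard ≤ (f '' P).ncard :=
    Set.ncard_le_ncard hsub (hPfin.image f)
  have h2 : (f '' P).ncard ≤ P.ncard := Set.ncard_image_le hPfin
  have h3 : P.ncard = S0.ncard * (S1.ncard * (S1.ncard * (S2.ncard * S2.ncard))) := by
    rw [hP, ncard_prod', ncard_prod', ncard_prod', ncard_prod']
  have h4 : S0.ncard ≤ Multiset.card X + 1 := by
    have : S0 ⊆ ↑(insert 0 X.toFinset) := by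
      rintro x (rfl | hx)
      · simp
      · simp [Multiset.mem_toFinset.mpr hx]
    calc S0.ncard ≤ (insert 0 X.toFinset).card := by
          rw [← Set.ncard_coe_finset]
          exact Set.ncard_le_ncard this (Finset.finite_toSet _)
      _ ≤ X.toFinset.card + 1 := Finset.card_insert_le _ _
      _ ≤ Multiset.card X + 1 := by
          have := Multiset.toFinset_card_le X; omega
  calc (subsetSumsR X t).ncard ≤ P.ncard := le_trans h1 h2
    _ = S0.ncard * (S1.ncard * (S1.ncard * (S2.ncard * S2.ncard))) := h3
    _ ≤ (Multiset.card X + 1) * (S1.ncard * (S1.ncard * (S2.ncard * S2.ncard))) :=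
        Nat.mul_le_mul_right _ h4
    _ = (Multiset.card X + 1) * S1.ncard ^ 2 * S2.ncard ^ 2 := by ring
end
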